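/- Let m ≥ 0, Q(y) = √8(m+1)y^m/(1+y^{2m+2}), A_θ[Q](y) = -2(m+1)y^{2m+2}/(1+y^{2m+2}), and Ṽ_Q(y) = (m+2+A_θ[Q](y))² + (1/2)y²Q(y)². Then the exact identity -y·∂_y Ṽ_Q(y) = y²Q(y)² holds for all y > 0. In particular Ṽ_Q is nonincreasing in y. -/

import Mathlib

/-- The `m`-equivariant Jackiw–Pi vortex profile. -/
noncomputable def Q (m : ℕ) (r : ℝ) : ℝ :=
  Real.sqrt 8 * (m + 1) * r ^ m / (1 + r ^ (2 * m + 2))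

/-- Closed-form of the angular connection component `A_θ[Q]`. -/
noncomputable def AthetaQ (m : ℕ) (y : ℝ) : ℝ :=
  -2 * (m + 1) * y ^ (2 * m + 2) / (1 + y ^ (2 * m + 2))

/-- The potential of the twice-conjugated linearized Hamiltonian `H̃_Q`. -/
noncomputable def Vtld (m : ℕ) (y : ℝ) : ℝ :=
  (m + 2 + AthetaQ m y) ^ 2 + (1 / 2) * y ^ 2 * (Q m y) ^ 2

lemma D_pos (m : ℕ) (y : ℝ) : 0 < 1 + y ^ (2 * m + 2) := by
  have h : y ^ (2 * m + 2) = (y ^ (m + 1)) ^ 2 := by ring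
  nlinarith [sq_nonneg (y ^ (m + 1))]

lemma Vtld_eq (m : ℕ) (y : ℝ) :
    Vtld m y = ((m : ℝ) + 2 - 2 * ((m : ℝ) + 1) * y ^ (2 * m + 2) / (1 + y ^ (2 * m + 2))) ^ 2
      + 4 * ((m : ℝ) + 1) ^ 2 * y ^ (2 * m + 2) / (1 + y ^ (2 * m + 2)) ^ 2 := by
  have hD : (1 : ℝ) + y ^ (2 * m + 2) ≠ 0 := (D_pos m y).ne'
  have h8 : Real.sqrt 8 ^ 2 = 8 := Real.sq_sqrt (by norm_num)
  simp only [Vtld, Q, AthetaQ, div_pow, mul_pow, h8]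
  field_simp
  ring

lemma hasDerivAt_Vtld (m : ℕ) {y : ℝ} (hy : 0 < y) :
    HasDerivAt (Vtld m)
      (-8 * ((m : ℝ) + 1) ^ 2 * y ^ (2 * m + 1) / (1 + y ^ (2 * m + 2)) ^ 2) y := by
  have hD0 : (0 : ℝ) < 1 + y ^ (2 * m + 2) := D_pos m y
  have hD : (1 : ℝ) + y ^ (2 * m + 2) ≠ 0 := hD0.ne'
  have hsub : 2 * m + 2 - 1 = 2 * m + 1 := by omega
  have hu : HasDerivAt (fun y : ℝ => y ^ (2 * m + 2))
      (((2 * m + 2 : ℕ) : ℝ) * y ^ (2 * m + 1)) y := by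
    simpa [hsub] using hasDerivAt_pow (2 * m + 2) y
  have hDd : HasDerivAt (fun y : ℝ => 1 + y ^ (2 * m + 2))
      (((2 * m + 2 : ℕ) : ℝ) * y ^ (2 * m + 1)) y := hu.const_add 1
  have h1 : HasDerivAt (fun y : ℝ => 2 * ((m : ℝ) + 1) * y ^ (2 * m + 2) / (1 + y ^ (2 * m + 2)))
      (((2 * ((m : ℝ) + 1) * (((2 * m + 2 : ℕ) : ℝ) * y ^ (2 * m + 1))) * (1 + y ^ (2 * m + 2))
        - (2 * ((m : ℝ) + 1) * y ^ (2 * m + 2)) * (((2 * m + 2 : ℕ) : ℝ) * y ^ (2 * m + 1)))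
        / (1 + y ^ (2 * m + 2)) ^ 2) y :=
    (hu.const_mul (2 * ((m : ℝ) + 1))).div hDd hD
  have h2 := ((h1.const_sub ((m : ℝ) + 2)).pow 2)
  have hD2 : HasDerivAt (fun y : ℝ => (1 + y ^ (2 * m + 2)) ^ 2)
      ((2 : ℕ) * (1 + y ^ (2 * m + 2)) ^ 1 * (((2 * m + 2 : ℕ) : ℝ) * y ^ (2 * m + 1))) y :=
    hDd.pow 2
  have hD2ne : ((1 : ℝ) + y ^ (2 * m + 2)) ^ 2 ≠ 0 := pow_ne_zero _ hD
  have h3 : HasDerivAt (fun y : ℝ => 4 * ((m : ℝ) + 1) ^ 2 * y ^ (2 * m + 2)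
      / (1 + y ^ (2 * m + 2)) ^ 2)
      (((4 * ((m : ℝ) + 1) ^ 2 * (((2 * m + 2 : ℕ) : ℝ) * y ^ (2 * m + 1)))
          * (1 + y ^ (2 * m + 2)) ^ 2
        - (4 * ((m : ℝ) + 1) ^ 2 * y ^ (2 * m + 2))
          * ((2 : ℕ) * (1 + y ^ (2 * m + 2)) ^ 1 * (((2 * m + 2 : ℕ) : ℝ) * y ^ (2 * m + 1))))
        / ((1 + y ^ (2 * m + 2)) ^ 2) ^ 2) y :=
    (hu.const_mul (4 * ((m : ℝ) + 1) ^ 2)).div hD2 hD2ne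
  have htot := h2.add h3
  have hfun : Vtld m = fun y : ℝ =>
      ((m : ℝ) + 2 - 2 * ((m : ℝ) + 1) * y ^ (2 * m + 2) / (1 + y ^ (2 * m + 2))) ^ 2
      + 4 * ((m : ℝ) + 1) ^ 2 * y ^ (2 * m + 2) / (1 + y ^ (2 * m + 2)) ^ 2 :=
    funext fun y => Vtld_eq m y
  rw [hfun]
  refine htot.congr_deriv ?_
  push_cast
  field_simp
  ring

theorem stmt9 (m : ℕ) :
    (∀ y : ℝ, 0 < y → -y * deriv (Vtld m) y = y ^ 2 * (Q m y) ^ 2) ∧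
    AntitoneOn (Vtld m) (Set.Ioi 0) := by
  constructor
  · intro y hy
    rw [(hasDerivAt_Vtld m hy).deriv]
    have hD : (1 : ℝ) + y ^ (2 * m + 2) ≠ 0 := (D_pos m y).ne'
    have h8 : Real.sqrt 8 ^ 2 = 8 := Real.sq_sqrt (by norm_num)
    simp only [Q, div_pow, mul_pow, h8]
    field_simp
    ring
  · apply antitoneOn_of_deriv_nonpos (convex_Ioi 0)
    · exact fun y hy => ((hasDerivAt_Vtld m hy).continuousAt).continuousWithinAt
    · rw [interior_Ioi]
      exact fun y hy => ((hasDerivAt_Vtld m hy).differentiableAt).differentiableWithinAt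
    · rw [interior_Ioi]
      intro y hy
      rw [(hasDerivAt_Vtld m hy).deriv]
      apply div_nonpos_of_nonpos_of_nonneg
      · have : (0:ℝ) ≤ y ^ (2 * m + 1) := le_of_lt (pow_pos hy _)
        nlinarith [sq_nonneg ((m : ℝ) + 1)]
      · positivity
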